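/- Let φ : L²[0,1] → ℝ ∪ {+∞} be defined by φ(x) = ∫₀¹ (x(t) − t)²/t dt if x ≥ −1 almost everywhere, and +∞ otherwise. Then the relative algebraic interior of dom φ is empty. -/

import Mathlib

open Pointwise MeasureTheory Set ENNReal

/-- Lebesgue measure on the interval `(0, 1]`. -/
noncomputable def μ0 : Measure ℝ := volume.restrict (Set.Ioc 0 1)

lemma lintegral_inv_Ioc_top {δ : ℝ} (hδ : 0 < δ) :
    ∫⁻ s in Set.Ioc 0 δ, ENNReal.ofReal s⁻¹ = ∞ := by
  by_contra h
  have hlt : ∫⁻ s in Set.Ioc 0 δ, ENNReal.ofReal s⁻¹ < ∞ := lt_top_iff_ne_top.2 h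
  have hint : IntegrableOn (fun s : ℝ => s⁻¹) (Set.Ioc 0 δ) := by
    constructor
    · exact (measurable_inv.comp measurable_id).aestronglyMeasurable
    · simp only [HasFiniteIntegral]
      calc ∫⁻ s in Set.Ioc 0 δ, (‖s⁻¹‖₊ : ℝ≥0∞)
          = ∫⁻ s in Set.Ioc 0 δ, ENNReal.ofReal s⁻¹ := by
            refine setLIntegral_congr_fun measurableSet_Ioc (fun s hs => ?_)
            exact Real.enorm_eq_ofReal (inv_nonneg.2 hs.1.le)
        _ < ∞ := hlt
  have : IntervalIntegrable (fun s : ℝ => s⁻¹) volume 0 δ := by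
    rw [intervalIntegrable_iff']
    rw [Set.uIcc_of_le hδ.le, integrableOn_Icc_iff_integrableOn_Ioc]
    exact hint
  rw [intervalIntegrable_inv_iff] at this
  rcases this with h1 | h2
  · exact hδ.ne' h1.symm
  · exact h2 (Set.left_mem_uIcc)

lemma exists_small_subset (E : Set ℝ) (hE : MeasurableSet E) (hE1 : E ⊆ Set.Ioc 0 1)
    (hpos : 0 < μ0 E) {ε : ℝ} (hε : 0 < ε) :
    ∃ B, MeasurableSet B ∧ B ⊆ E ∧ 0 < μ0 B ∧
      ∫⁻ s in B, ENNReal.ofReal s⁻¹ ∂μ0 ≤ ENNReal.ofReal ε := by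
  -- Step 1: find a > 0 with positive measure above a
  obtain ⟨k, hk⟩ : ∃ k : ℕ, 0 < μ0 (E ∩ Set.Ioi (1 / (k + 1) : ℝ)) := by
    by_contra hc
    push_neg at hc
    have hcover : E ⊆ ⋃ k : ℕ, E ∩ Set.Ioi (1 / (k + 1) : ℝ) := by
      intro s hs
      obtain ⟨k, hk⟩ := exists_nat_one_div_lt (hE1 hs).1
      exact Set.mem_iUnion.2 ⟨k, hs, hk⟩
    have := measure_mono_null hcover (measure_iUnion_null fun k => le_antisymm (hc k) zero_le)
    exact hpos.ne' this
  set a : ℝ := 1 / (k + 1) with ha_def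
  have ha : 0 < a := by positivity
  set E' := E ∩ Set.Ioi a with hE'
  have hE'm : MeasurableSet E' := hE.inter measurableSet_Ioi
  -- Step 2: cover (a,1] with small intervals
  set δ : ℝ := ε * a with hδ_def
  have hδ : 0 < δ := by positivity
  set m : ℕ := ⌈(1 : ℝ) / δ⌉₊ with hm
  have hcov : E' ⊆ ⋃ j ∈ Finset.range m, Set.Ioc (a + j * δ) (a + (j + 1) * δ) := by
    intro s hs
    have hsa : a < s := hs.2
    have hs1 : s ≤ 1 := (hE1 hs.1).2
    set c : ℕ := ⌈(s - a) / δ⌉₊ with hc_def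
    have hc1 : 1 ≤ c := Nat.one_le_ceil_iff.2 (div_pos (by linarith) hδ)
    have hcm : c ≤ m := Nat.ceil_le_ceil (by gcongr; linarith)
    refine Set.mem_biUnion (Finset.mem_range.2 ?_ : c - 1 ∈ Finset.range m) ?_
    · omega
    · have hcast : ((c - 1 : ℕ) : ℝ) = (c : ℝ) - 1 := by
        push_cast [hc1]
        ring
      have hlow : (c : ℝ) - 1 < (s - a) / δ := by
        by_contra hcon
        push_neg at hcon
        have : c ≤ c - 1 := Nat.ceil_le.2 (by rw [hcast]; exact hcon)
        omega
      have h1 : ((c : ℝ) - 1) * δ < s - a := (lt_div_iff₀ hδ).1 hlow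
      have h2 : s - a ≤ (c : ℝ) * δ := (div_le_iff₀ hδ).1 (Nat.le_ceil _)
      constructor
      · rw [hcast]; linarith
      · rw [hcast]; linarith
  -- Step 3: one piece has positive measure
  obtain ⟨j, hjm, hjpos⟩ : ∃ j ∈ Finset.range m,
      0 < μ0 (E' ∩ Set.Ioc (a + j * δ) (a + (j + 1) * δ)) := by
    by_contra hc
    push_neg at hc
    have hnull : μ0 (⋃ j ∈ Finset.range m, E' ∩ Set.Ioc (a + j * δ) (a + (j + 1) * δ)) = 0 :=
      (measure_biUnion_null_iff (Finset.range m).countable_toSet).2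
        (fun j hjm => le_antisymm (hc j hjm) zero_le)
    refine hk.ne' (measure_mono_null (fun s hs => ?_) hnull)
    obtain ⟨j, hjm2, hsj⟩ := Set.mem_iUnion₂.1 (hcov hs)
    exact Set.mem_iUnion₂.2 ⟨j, hjm2, hs, hsj⟩
  refine ⟨E' ∩ Set.Ioc (a + j * δ) (a + (j + 1) * δ),
    hE'm.inter measurableSet_Ioc, fun s hs => hs.1.1, hjpos, ?_⟩
  have hμB : μ0 (E' ∩ Set.Ioc (a + j * δ) (a + (j + 1) * δ)) ≤ ENNReal.ofReal δ := by
    calc μ0 (E' ∩ Set.Ioc (a + j * δ) (a + (j + 1) * δ))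
        ≤ volume (Set.Ioc (a + j * δ) (a + (j + 1) * δ)) := by
          refine le_trans (Measure.restrict_le_self _) (measure_mono Set.inter_subset_right)
      _ = ENNReal.ofReal δ := by rw [Real.volume_Ioc]; ring_nf
  calc ∫⁻ s in E' ∩ Set.Ioc (a + j * δ) (a + (j + 1) * δ), ENNReal.ofReal s⁻¹ ∂μ0
      ≤ ∫⁻ _ in E' ∩ Set.Ioc (a + j * δ) (a + (j + 1) * δ), ENNReal.ofReal a⁻¹ ∂μ0 := by
        refine setLIntegral_mono measurable_const (fun s hs => ?_)
        exact ENNReal.ofReal_le_ofReal (inv_anti₀ ha hs.1.2.le)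
    _ = ENNReal.ofReal a⁻¹ * μ0 (E' ∩ Set.Ioc (a + j * δ) (a + (j + 1) * δ)) := by
        rw [setLIntegral_const]
    _ ≤ ENNReal.ofReal a⁻¹ * ENNReal.ofReal δ := by gcongr
    _ = ENNReal.ofReal (a⁻¹ * δ) := (ENNReal.ofReal_mul (by positivity)).symm
    _ = ENNReal.ofReal ε := by rw [hδ_def]; congr 1; field_simp

/-- The relative algebraic interior of a set `S`. -/
def icr {X : Type*} [AddCommGroup X] [Module ℝ X] (S : Set X) : Set X :=
  {x | x ∈ S ∧ ∀ y ∈ Submodule.span ℝ (S - S), ∃ t : ℝ, 0 < t ∧ x + t • y ∈ S}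

/-- The effective domain of `φ(x) = ∫₀¹ (x(t) − t)²/t dt` (with value `+∞` unless
`x ≥ −1` a.e.), viewed inside `L²[0,1]`. -/
def domPhi : Set (Lp ℝ 2 μ0) :=
  {x | (∀ᵐ t ∂μ0, (-1 : ℝ) ≤ x t) ∧
    (∫⁻ t, ENNReal.ofReal ((x t - t) ^ 2 / t) ∂μ0) < ⊤}

lemma ae_mem_Ioc : ∀ᵐ s ∂μ0, s ∈ Set.Ioc (0:ℝ) 1 := ae_restrict_mem measurableSet_Ioc

lemma μ0_univ : μ0 Set.univ = 1 := by
  show volume.restrict _ _ = 1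
  rw [Measure.restrict_apply_univ, Real.volume_Ioc]
  norm_num

lemma zero_mem_domPhi : (0 : Lp ℝ 2 μ0) ∈ domPhi := by
  constructor
  · filter_upwards [Lp.coeFn_zero ℝ 2 μ0] with s hs
    rw [hs]; norm_num
  · calc ∫⁻ s, ENNReal.ofReal (((0 : Lp ℝ 2 μ0) s - s) ^ 2 / s) ∂μ0
        ≤ ∫⁻ _, 1 ∂μ0 := by
          refine lintegral_mono_ae ?_
          filter_upwards [Lp.coeFn_zero ℝ 2 μ0, ae_mem_Ioc] with s hs hs2
          rw [hs]
          have h1 : ((0:ℝ) - s) ^ 2 / s = s := by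
            rw [zero_sub, neg_sq, sq, mul_div_assoc, div_self hs2.1.ne', mul_one]
          rw [Pi.zero_apply, h1]
          exact ENNReal.ofReal_le_one.2 hs2.2
      _ < ⊤ := by rw [lintegral_one, μ0_univ]; exact ENNReal.one_lt_top

theorem stmt_16 : icr domPhi = ∅ := by
  rw [Set.eq_empty_iff_forall_notMem]
  intro x hx
  obtain ⟨⟨hae, hint⟩, hstar⟩ := hx
  have hXm : Measurable (⇑x) := (Lp.stronglyMeasurable x).measurable
  -- the sets where x is small, near 0
  set En : ℕ → Set ℝ := fun n =>
    {s | x s ≤ (n : ℝ) + 2} ∩ Set.Ioc 0 (1 / ((n : ℝ) + 2)) with hEn_def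
  have hEnm : ∀ n, MeasurableSet (En n) := fun n =>
    (measurableSet_le hXm measurable_const).inter measurableSet_Ioc
  have hEn1 : ∀ n, En n ⊆ Set.Ioc 0 1 := by
    intro n s hs
    refine ⟨hs.2.1, hs.2.2.trans ?_⟩
    rw [div_le_one (by positivity)]
    have : (0:ℝ) ≤ (n:ℝ) := Nat.cast_nonneg n
    linarith
  have hEnpos : ∀ n, 0 < μ0 (En n) := by
    intro n
    rcases (zero_le : 0 ≤ μ0 (En n)).lt_or_eq with h | h
    · exact h
    have hnotin : ∀ᵐ s ∂μ0, s ∉ En n := by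
      rw [ae_iff]; push_neg; simpa using h.symm
    have hbig : (⊤ : ℝ≥0∞) ≤ ∫⁻ s, ENNReal.ofReal ((x s - s) ^ 2 / s) ∂μ0 := by
      have hδ : (0:ℝ) < 1 / ((n : ℝ) + 2) := by positivity
      have hδ1 : (1:ℝ) / ((n : ℝ) + 2) ≤ 1 := by
        rw [div_le_one (by positivity)]
        have : (0:ℝ) ≤ (n:ℝ) := Nat.cast_nonneg n
        linarith
      calc (⊤ : ℝ≥0∞) = ∫⁻ s in Set.Ioc 0 (1 / ((n : ℝ) + 2)), ENNReal.ofReal s⁻¹ ∂μ0 := by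
            have : μ0.restrict (Set.Ioc 0 (1 / ((n : ℝ) + 2)))
                = volume.restrict (Set.Ioc 0 (1 / ((n : ℝ) + 2))) := by
              show (volume.restrict _).restrict _ = _
              rw [Measure.restrict_restrict measurableSet_Ioc, Set.Ioc_inter_Ioc]
              congr 1
              rw [max_self, min_eq_left hδ1]
            rw [this, lintegral_inv_Ioc_top hδ]
        _ ≤ ∫⁻ s in Set.Ioc 0 (1 / ((n : ℝ) + 2)), ENNReal.ofReal ((x s - s) ^ 2 / s) ∂μ0 := by
            refine lintegral_mono_ae ?_
            filter_upwards [ae_restrict_mem measurableSet_Ioc,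
              ae_restrict_of_ae hnotin] with s hs hs2
            have hxs : (n : ℝ) + 2 < x s := by
              by_contra hcon
              push_neg at hcon
              exact hs2 ⟨hcon, hs⟩
            have h0s : 0 < s := hs.1
            have hs1 : s ≤ 1 := hs.2.trans hδ1
            refine ENNReal.ofReal_le_ofReal ?_
            rw [div_eq_mul_inv, ← one_mul s⁻¹]
            have hn0 : (0:ℝ) ≤ (n:ℝ) := Nat.cast_nonneg n
            have h1 : (1:ℝ) ≤ (x s - s) ^ 2 := by nlinarith
            have : (1:ℝ) * s⁻¹ ≤ (x s - s) ^ 2 * s⁻¹ := by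
              apply mul_le_mul_of_nonneg_right h1 (by positivity)
            simpa using this
        _ ≤ ∫⁻ s, ENNReal.ofReal ((x s - s) ^ 2 / s) ∂μ0 := setLIntegral_le_lintegral _ _
    exact ((hbig.trans_lt hint).ne rfl).elim
  -- choose small pieces
  choose B hBm hBE hBpos hBint using fun n =>
    exists_small_subset (En n) (hEnm n) (hEn1 n) (hEnpos n)
      (ε := ((2:ℝ) ^ n * ((n:ℝ) + 2) ^ 4)⁻¹) (by positivity)
  -- the unbounded direction
  set F : ℕ → ℝ → ℝ≥0∞ := fun n =>
    (B n).indicator fun _ => ENNReal.ofReal (((n:ℝ) + 2) ^ 2) with hF_def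
  set Bf : ℝ → ℝ≥0∞ := fun s => ⨆ n, F n s with hBf_def
  set S : ℝ → ℝ≥0∞ := fun s =>
    ∑' n, (B n).indicator (fun _ => ENNReal.ofReal (((n:ℝ) + 2) ^ 4)) s with hS_def
  have hFm : ∀ n, Measurable (F n) := fun n => measurable_const.indicator (hBm n)
  have hBfm : Measurable Bf := Measurable.iSup hFm
  have hSm : Measurable S :=
    Measurable.ennreal_tsum fun n => measurable_const.indicator (hBm n)
  have hFsqS : ∀ n s, F n s ^ 2 ≤ S s := by
    intro n s
    by_cases hsB : s ∈ B n
    · have h1 : F n s ^ 2 = ENNReal.ofReal (((n:ℝ) + 2) ^ 4) := by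
        rw [hF_def]; simp only [Set.indicator_of_mem hsB]
        rw [← ENNReal.ofReal_pow (by positivity)]
        ring_nf
      rw [h1]
      refine le_trans ?_ (ENNReal.le_tsum n)
      rw [Set.indicator_of_mem hsB]
    · rw [hF_def]; simp [Set.indicator_of_notMem hsB]
  have hBsq : ∀ s, Bf s ^ 2 ≤ S s := by
    intro s
    rw [sq, hBf_def]
    simp only
    rw [ENNReal.iSup_mul]
    refine iSup_le fun n => ?_
    rw [ENNReal.mul_iSup]
    refine iSup_le fun m => ?_
    rcases le_total (F n s) (F m s) with h | h
    · calc F n s * F m s ≤ F m s * F m s := mul_le_mul_left h _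
        _ ≤ S s := by rw [← sq]; exact hFsqS m s
    · calc F n s * F m s ≤ F n s * F n s := mul_le_mul_right h _
        _ ≤ S s := by rw [← sq]; exact hFsqS n s
  have hBfS : ∀ s, Bf s ≤ S s := by
    intro s
    refine iSup_le fun n => ?_
    by_cases hsB : s ∈ B n
    · rw [hF_def]
      simp only [Set.indicator_of_mem hsB]
      refine le_trans ?_ (ENNReal.le_tsum n)
      rw [Set.indicator_of_mem hsB]
      refine ENNReal.ofReal_le_ofReal ?_
      have h12 : (1:ℝ) ≤ (n:ℝ) + 2 := by
        have : (0:ℝ) ≤ (n:ℝ) := Nat.cast_nonneg n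
        linarith
      exact pow_le_pow_right₀ h12 (by norm_num)
    · rw [hF_def]; simp [Set.indicator_of_notMem hsB]
  -- integral of S * 1/s is finite
  have hSint : ∫⁻ s, S s * ENNReal.ofReal s⁻¹ ∂μ0 < ⊤ := by
    have hpt : ∀ s, S s * ENNReal.ofReal s⁻¹
        = ∑' n, (B n).indicator
            (fun u => ENNReal.ofReal (((n:ℝ) + 2) ^ 4) * ENNReal.ofReal u⁻¹) s := by
      intro s
      rw [hS_def]
      simp only
      rw [← ENNReal.tsum_mul_right]
      exact tsum_congr fun n => by by_cases hs : s ∈ B n <;> simp [hs]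
    calc ∫⁻ s, S s * ENNReal.ofReal s⁻¹ ∂μ0
        = ∑' n, ∫⁻ s, (B n).indicator
            (fun u => ENNReal.ofReal (((n:ℝ) + 2) ^ 4) * ENNReal.ofReal u⁻¹) s ∂μ0 := by
          rw [lintegral_congr hpt]
          exact lintegral_tsum fun n =>
            (((measurable_inv.ennreal_ofReal).const_mul _).indicator
              (hBm n)).aemeasurable
      _ ≤ ∑' n, ((2:ℝ≥0∞)⁻¹) ^ n := by
          refine ENNReal.tsum_le_tsum fun n => ?_
          rw [lintegral_indicator (hBm n) _,
            lintegral_const_mul _ (measurable_inv.ennreal_ofReal)]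
          calc ENNReal.ofReal (((n:ℝ) + 2) ^ 4) * ∫⁻ u in B n, ENNReal.ofReal u⁻¹ ∂μ0
              ≤ ENNReal.ofReal (((n:ℝ) + 2) ^ 4)
                  * ENNReal.ofReal ((2:ℝ) ^ n * ((n:ℝ) + 2) ^ 4)⁻¹ := by
                gcongr
                exact hBint n
            _ = ENNReal.ofReal (((n:ℝ) + 2) ^ 4 * ((2:ℝ) ^ n * ((n:ℝ) + 2) ^ 4)⁻¹) :=
                (ENNReal.ofReal_mul (by positivity)).symm
            _ = ENNReal.ofReal (((2:ℝ)⁻¹) ^ n) := by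
                congr 1
                have hn2 : ((n:ℝ) + 2) ^ 4 ≠ 0 := by positivity
                field_simp
                rw [← mul_pow]; norm_num
            _ = ((2:ℝ≥0∞)⁻¹) ^ n := by
                rw [ENNReal.ofReal_pow (by norm_num)]
                congr 1
                rw [ENNReal.ofReal_inv_of_pos (by norm_num)]
                norm_num
      _ < ⊤ := by
          rw [ENNReal.tsum_geometric, ENNReal.one_sub_inv_two]
          simp
  have hS1 : ∀ᵐ s ∂μ0, S s ≤ S s * ENNReal.ofReal s⁻¹ := by
    filter_upwards [ae_mem_Ioc] with s hs
    conv_lhs => rw [← mul_one (S s)]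
    refine mul_le_mul_right ?_ _
    rw [show (1:ℝ≥0∞) = ENNReal.ofReal 1 by simp]
    exact ENNReal.ofReal_le_ofReal ((one_le_inv₀ hs.1).2 hs.2)
  have hSfin : ∫⁻ s, S s ∂μ0 < ⊤ := (lintegral_mono_ae hS1).trans_lt hSint
  have hBfin : ∀ᵐ s ∂μ0, Bf s < ⊤ := by
    filter_upwards [ae_lt_top hSm hSfin.ne] with s hs
    exact (hBfS s).trans_lt hs
  set g : ℝ → ℝ := fun s => (Bf s).toReal with hg_def
  have hgm : Measurable g := hBfm.ennreal_toReal
  have hgnn : ∀ s, 0 ≤ g s := fun s => ENNReal.toReal_nonneg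
  have hBfint : ∫⁻ s, Bf s ^ 2 ∂μ0 < ⊤ :=
    (lintegral_mono fun s => hBsq s).trans_lt hSfin
  have hgmem : MemLp g 2 μ0 := by
    refine ⟨hgm.aestronglyMeasurable, ?_⟩
    rw [eLpNorm_eq_lintegral_rpow_enorm_toReal (by norm_num) (by norm_num)]
    refine ENNReal.rpow_lt_top_of_nonneg (by norm_num) ?_
    have hcongr : ∀ᵐ s ∂μ0, ‖g s‖ₑ ^ ((2:ℝ≥0∞).toReal) = Bf s ^ 2 := by
      filter_upwards [hBfin] with s hs
      rw [Real.enorm_eq_ofReal (hgnn s), hg_def]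
      simp only
      rw [ENNReal.ofReal_toReal hs.ne]
      rw [show ((2:ℝ≥0∞).toReal) = ((2:ℕ):ℝ) by simp, ENNReal.rpow_natCast]
    rw [lintegral_congr_ae hcongr]
    exact hBfint.ne
  set b : Lp ℝ 2 μ0 := hgmem.toLp g with hb_def
  have hb_mem : b ∈ domPhi := by
    constructor
    · filter_upwards [hgmem.coeFn_toLp] with s hs
      rw [hb_def, hs]
      linarith [hgnn s]
    · calc ∫⁻ s, ENNReal.ofReal ((b s - s) ^ 2 / s) ∂μ0
          = ∫⁻ s, ENNReal.ofReal ((g s - s) ^ 2 / s) ∂μ0 := by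
            refine lintegral_congr_ae ?_
            filter_upwards [hgmem.coeFn_toLp] with s hs
            rw [hb_def, hs]
        _ ≤ ∫⁻ s, (2 * (Bf s ^ 2 * ENNReal.ofReal s⁻¹) + 2 * ENNReal.ofReal s) ∂μ0 := by
            refine lintegral_mono_ae ?_
            filter_upwards [ae_mem_Ioc, hBfin] with s hs hfin
            have h0 : 0 < s := hs.1
            have hgs2 : ENNReal.ofReal (g s ^ 2) = Bf s ^ 2 := by
              rw [ENNReal.ofReal_pow (hgnn s), hg_def]
              simp only
              rw [ENNReal.ofReal_toReal hfin.ne]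
            have key : (g s - s) ^ 2 / s ≤ 2 * (g s ^ 2 * s⁻¹) + 2 * s := by
              rw [div_eq_mul_inv]
              have h1 : (g s - s) ^ 2 ≤ 2 * g s ^ 2 + 2 * s ^ 2 := by nlinarith [sq_nonneg (g s + s)]
              have h2 : (g s - s) ^ 2 * s⁻¹ ≤ (2 * g s ^ 2 + 2 * s ^ 2) * s⁻¹ :=
                mul_le_mul_of_nonneg_right h1 (by positivity)
              have h4 : s ^ 2 * s⁻¹ = s := by
                rw [sq, mul_assoc, mul_inv_cancel₀ h0.ne', mul_one]
              have h3 : (2 * g s ^ 2 + 2 * s ^ 2) * s⁻¹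
                  = 2 * (g s ^ 2 * s⁻¹) + 2 * (s ^ 2 * s⁻¹) := by ring
              linarith [h2]
            calc ENNReal.ofReal ((g s - s) ^ 2 / s)
                ≤ ENNReal.ofReal (2 * (g s ^ 2 * s⁻¹) + 2 * s) := ENNReal.ofReal_le_ofReal key
              _ = 2 * (Bf s ^ 2 * ENNReal.ofReal s⁻¹) + 2 * ENNReal.ofReal s := by
                  rw [ENNReal.ofReal_add (by positivity) (by positivity),
                    ENNReal.ofReal_mul (by norm_num : (0:ℝ) ≤ 2),
                    ENNReal.ofReal_mul (by norm_num : (0:ℝ) ≤ 2),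
                    ENNReal.ofReal_mul (sq_nonneg _), hgs2, ENNReal.ofReal_ofNat]
        _ < ⊤ := by
            have hmeas : Measurable fun s => 2 * (Bf s ^ 2 * ENNReal.ofReal s⁻¹) :=
              ((hBfm.pow_const 2).mul (measurable_inv.ennreal_ofReal)).const_mul 2
            rw [lintegral_add_left hmeas]
            refine ENNReal.add_lt_top.2 ⟨?_, ?_⟩
            · rw [lintegral_const_mul' 2 _ (by norm_num)]
              refine ENNReal.mul_lt_top (by norm_num) ?_
              refine lt_of_le_of_lt ?_ hSint
              exact lintegral_mono fun s => mul_le_mul_left (hBsq s) _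
            · rw [lintegral_const_mul' 2 _ (by norm_num)]
              refine ENNReal.mul_lt_top (by norm_num) ?_
              calc ∫⁻ s, ENNReal.ofReal s ∂μ0 ≤ ∫⁻ _, 1 ∂μ0 := by
                    refine lintegral_mono_ae ?_
                    filter_upwards [ae_mem_Ioc] with s hs
                    exact ENNReal.ofReal_le_one.2 hs.2
                _ < ⊤ := by rw [lintegral_one, μ0_univ]; exact ENNReal.one_lt_top
  have hy_span : -b ∈ Submodule.span ℝ (domPhi - domPhi) := by
    refine Submodule.subset_span ?_
    have := Set.sub_mem_sub zero_mem_domPhi hb_mem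
    rwa [zero_sub] at this
  obtain ⟨t, ht, htmem⟩ := hstar (-b) hy_span
  obtain ⟨n, hn⟩ : ∃ n : ℕ, 2 ≤ t * ((n:ℝ) + 2) := by
    obtain ⟨n, hn⟩ := exists_nat_ge (2 / t)
    exact ⟨n, by rw [div_le_iff₀ ht] at hn; nlinarith⟩
  -- contradiction on B n
  have hcoe : ∀ᵐ s ∂μ0, (x + t • (-b)) s = x s - t * g s := by
    filter_upwards [Lp.coeFn_add x (t • (-b)), Lp.coeFn_smul t (-b), Lp.coeFn_neg b,
      hgmem.coeFn_toLp] with s h1 h2 h3 h4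
    rw [h1, Pi.add_apply, h2, Pi.smul_apply, h3, Pi.neg_apply, hb_def, h4]
    simp only [smul_eq_mul]
    ring
  have hnmem : ∀ᵐ s ∂μ0, s ∉ B n := by
    filter_upwards [htmem.1, hcoe, hBfin] with s h1 h2 h3
    intro hsB
    have hXs : x s ≤ (n : ℝ) + 2 := (hBE n hsB).1
    have hBfs : ENNReal.ofReal (((n:ℝ) + 2) ^ 2) ≤ Bf s := by
      refine le_trans (le_of_eq ?_) (le_iSup (fun k => F k s) n)
      rw [hF_def]; simp [Set.indicator_of_mem hsB]
    have hgs : ((n:ℝ) + 2) ^ 2 ≤ g s := by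
      rw [hg_def]
      calc ((n:ℝ) + 2) ^ 2 = (ENNReal.ofReal (((n:ℝ) + 2) ^ 2)).toReal := by
            rw [ENNReal.toReal_ofReal (by positivity)]
        _ ≤ (Bf s).toReal := ENNReal.toReal_mono h3.ne hBfs
    rw [h2] at h1
    nlinarith [hgnn s]
  have : μ0 (B n) = 0 := by
    have hsub : B n ⊆ {s | s ∈ B n} := fun s hs => hs
    rw [ae_iff] at hnmem
    simpa using hnmem
  exact (hBpos n).ne' this
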